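/- arXiv:1811.03956 — 2 statements merged into one kernel-verified Lean document; each statement's English description precedes it below -/
import Mathlib

section
/- Let v, g ∈ ℝⁿ with g ≠ 0, and suppose v is not a scalar multiple of g. Let β ≠ 0 and Ξ = I + (1/β)·v gᵀ. Then the Euclidean operator norm of Ξ is strictly greater than 1. -/
open Matrix


/-- The Euclidean (ℓ²-induced) operator norm of a square real matrix. -/
noncomputable def eucOpNorm {n : ℕ} (M : Matrix (Fin n) (Fin n) ℝ) : ℝ :=
  ‖Matrix.toEuclideanCLM (𝕜 := ℝ) M‖

lemma eucNormSq {n : ℕ} (w : Fin n → ℝ) :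
    ‖((WithLp.equiv 2 (Fin n → ℝ)).symm w)‖ ^ 2 = w ⬝ᵥ w := by
  rw [← real_inner_self_eq_norm_sq]
  simp only [WithLp.equiv_symm_apply, PiLp.inner_apply, dotProduct, RCLike.inner_apply, conj_trivial]

/-- If `g ≠ 0`, `v` is not a scalar multiple of `g`, `β ≠ 0`, and
`Ξ = I + (1/β) v gᵀ` on `ℝⁿ` with `n ≥ 2`, then the Euclidean operator norm of `Ξ`
is strictly greater than `1`. -/
theorem opNorm_nonaligned_rank_one_gt_one
    {n : ℕ} (hn : 2 ≤ n) (v g : Fin n → ℝ) (hg : g ≠ 0)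
    (hv : ¬ ∃ t : ℝ, v = t • g) (β : ℝ) (hβ : β ≠ 0) :
    1 < eucOpNorm ((1 : Matrix (Fin n) (Fin n) ℝ) + (1 / β) • Matrix.vecMulVec v g) := by
  classical
  have hv0 : v ≠ 0 := fun h => hv ⟨0, by simp [h]⟩
  have hvv0 : v ⬝ᵥ v ≠ 0 := fun h => hv0 (dotProduct_self_eq_zero.mp h)
  have hvvpos : (0:ℝ) < v ⬝ᵥ v :=
    lt_of_le_of_ne (Finset.sum_nonneg fun i _ => mul_self_nonneg _) (Ne.symm hvv0)
  set c : ℝ := (v ⬝ᵥ g) / (v ⬝ᵥ v) with hc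
  set z : Fin n → ℝ := g - c • v with hzdef
  -- z is orthogonal to v
  have hvz : v ⬝ᵥ z = 0 := by
    simp only [hzdef, dotProduct_sub, dotProduct_smul, smul_eq_mul, hc]
    field_simp
    simp
  have hzv : z ⬝ᵥ v = 0 := by rwa [dotProduct_comm]
  -- z ≠ 0
  have hz0 : z ≠ 0 := by
    intro h
    have hgc : g = c • v := by
      have := sub_eq_zero.mp h
      simpa using this
    have hc0 : c ≠ 0 := by intro h0; rw [h0, zero_smul] at hgc; exact hg hgc
    exact hv ⟨c⁻¹, by rw [hgc, smul_smul, inv_mul_cancel₀ hc0, one_smul]⟩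
  have hzz0 : z ⬝ᵥ z ≠ 0 := fun h => hz0 (dotProduct_self_eq_zero.mp h)
  have hzzpos : (0:ℝ) < z ⬝ᵥ z :=
    lt_of_le_of_ne (Finset.sum_nonneg fun i _ => mul_self_nonneg _) (Ne.symm hzz0)
  -- g ⬝ᵥ z = z ⬝ᵥ z
  have hgz : g ⬝ᵥ z = z ⬝ᵥ z := by
    have : g = z + c • v := by rw [hzdef, sub_add_cancel]
    rw [this, add_dotProduct, smul_dotProduct, hvz, smul_zero, add_zero]
  set M : Matrix (Fin n) (Fin n) ℝ := 1 + (1/β) • Matrix.vecMulVec v g with hM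
  set a : ℝ := (z ⬝ᵥ z) / β with ha
  have ha0 : a ≠ 0 := div_ne_zero hzz0 hβ
  -- M *ᵥ z = z + a • v
  have hMz : M *ᵥ z = z + a • v := by
    have h1 : Matrix.vecMulVec v g *ᵥ z = (g ⬝ᵥ z) • v := by
      funext i
      simp only [Matrix.mulVec, Matrix.vecMulVec_apply, dotProduct, Pi.smul_apply,
        smul_eq_mul]
      rw [Finset.sum_mul]
      exact Finset.sum_congr rfl fun j _ => by ring
    rw [hM, Matrix.add_mulVec, Matrix.one_mulVec, Matrix.smul_mulVec, h1, hgz,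
      smul_smul, ha]
    congr 1
    ring
  -- squared norms
  have hsq : (M *ᵥ z) ⬝ᵥ (M *ᵥ z) = z ⬝ᵥ z + a^2 * (v ⬝ᵥ v) := by
    rw [hMz]
    simp only [add_dotProduct, dotProduct_add, smul_dotProduct,
      dotProduct_smul, smul_eq_mul, hvz, hzv]
    ring
  -- transfer to EuclideanSpace
  set Z : EuclideanSpace ℝ (Fin n) := (WithLp.equiv 2 (Fin n → ℝ)).symm z with hZ
  set T := Matrix.toEuclideanCLM (𝕜 := ℝ) M with hT
  have hTZ : T Z = (WithLp.equiv 2 (Fin n → ℝ)).symm (M *ᵥ z) := by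
    rw [hT, hZ]; rfl
  have hnormZ : ‖Z‖ ^ 2 = z ⬝ᵥ z := eucNormSq z
  have hnormTZ : ‖T Z‖ ^ 2 = z ⬝ᵥ z + a^2 * (v ⬝ᵥ v) := by
    rw [hTZ, eucNormSq, hsq]
  have hlt : ‖Z‖ < ‖T Z‖ := by
    apply lt_of_pow_lt_pow_left₀ 2 (norm_nonneg _)
    rw [hnormZ, hnormTZ]
    nlinarith [sq_nonneg a, pow_pos (abs_pos.mpr ha0) 2, sq_abs a]
  have hZ0 : Z ≠ 0 := by
    rw [hZ]
    intro h
    exact hz0 ((WithLp.equiv 2 (Fin n → ℝ)).symm.injective (by simpa using h))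
  have hZpos : 0 < ‖Z‖ := norm_pos_iff.mpr hZ0
  have hle : ‖T Z‖ ≤ ‖T‖ * ‖Z‖ := T.le_opNorm Z
  have : 1 * ‖Z‖ < ‖T‖ * ‖Z‖ := by
    rw [one_mul]; exact lt_of_lt_of_le hlt hle
  have hfin : 1 < ‖T‖ := lt_of_mul_lt_mul_right this (norm_nonneg Z)
  exact hfin
end

section
/- Let A = [[−a_L, 0],[0, −b_L]] and B = [[−a_R, 0],[0, −b_R]] with a_L, a_R, b_L, b_R > 0. Define, for small ε_L, ε_R > 0 and δ ∈ ℝ, the points x = (1−ε_L, x₂) and z = (1+ε_R, x₂+δ). The derivative of ‖x−z‖₂² along the flows ẋ = Ax, ż = Bz equals 2(ε_L+ε_R)(a_L−a_R) + 2δx₂(b_L−b_R) + O(ε_L², ε_R², δ², ε_Lδ, ε_Rδ). In particular, the first-order terms are nonpositive for all x₂ ≥ 0 and all small ε_L, ε_R > 0, δ ∈ ℝ if and only if a_L ≤ a_R and b_L = b_R. -/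
/-- For `A = diag(−a_L, −b_L)`, `B = diag(−a_R, −b_R)` with positive parameters, and
points `x = (1−ε_L, x₂)`, `z = (1+ε_R, x₂+δ)`, the derivative of `‖x−z‖₂²` along the
flows `ẋ = Ax`, `ż = Bz`, namely `2(x−z)ᵀ(Ax − Bz)`, equals
`2(ε_L+ε_R)(a_L−a_R) + 2δx₂(b_L−b_R)` plus an explicit remainder that is quadratic in
`ε_L, ε_R, δ`; and the first-order terms are nonpositive for all `x₂ ≥ 0` and all
`ε_L, ε_R > 0`, `δ ∈ ℝ`, if and only if `a_L ≤ a_R` and `b_L = b_R`. -/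
theorem piecewise_linear_contraction_first_order
    (aL aR bL bR : ℝ) (haL : 0 < aL) (haR : 0 < aR) (hbL : 0 < bL) (hbR : 0 < bR) :
    (∀ εL εR δ x₂ : ℝ,
      2 * dotProduct (![1 - εL, x₂] - ![1 + εR, x₂ + δ])
          ((!![-aL, 0; 0, -bL] : Matrix (Fin 2) (Fin 2) ℝ).mulVec ![1 - εL, x₂] -
            (!![-aR, 0; 0, -bR] : Matrix (Fin 2) (Fin 2) ℝ).mulVec ![1 + εR, x₂ + δ]) =
        2 * (εL + εR) * (aL - aR) + 2 * δ * x₂ * (bL - bR)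
          - 2 * (εL + εR) * (aL * εL + aR * εR) - 2 * bR * δ ^ 2) ∧
    ((∀ x₂ : ℝ, 0 ≤ x₂ → ∀ εL εR : ℝ, 0 < εL → 0 < εR → ∀ δ : ℝ,
        2 * (εL + εR) * (aL - aR) + 2 * δ * x₂ * (bL - bR) ≤ 0) ↔
      (aL ≤ aR ∧ bL = bR)) := by
  constructor
  · intro εL εR δ x₂
    simp [dotProduct, Matrix.mulVec, Fin.sum_univ_two]
    ring
  · constructor
    · intro h
      have hale : aL ≤ aR := by
        by_contra hlt
        push_neg at hlt
        have := h 0 le_rfl 1 1 one_pos one_pos 0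
        nlinarith
      refine ⟨hale, ?_⟩
      by_contra hne
      have h1 : (0:ℝ) < |bL - bR| := abs_pos.mpr (sub_ne_zero.mpr hne)
      set ε : ℝ := |bL - bR| / (8 * (|aL - aR| + 1)) with hε
      have hεpos : 0 < ε := by positivity
      have := h 1 zero_le_one ε ε hεpos hεpos ((bL - bR) / |bL - bR|)
      have hd : (bL - bR) / |bL - bR| * (bL - bR) = |bL - bR| := by
        rw [div_mul_eq_mul_div, ← abs_mul_abs_self (bL - bR),
          mul_div_assoc, div_self h1.ne', mul_one]
      have habs : aL - aR ≤ |aL - aR| := le_abs_self _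
      have habs2 : -(|aL - aR|) ≤ aL - aR := neg_abs_le _
      have hεsmall : 4 * ε * (|aL - aR| + 1) = |bL - bR| / 2 := by
        rw [hε]; field_simp; ring
      nlinarith [abs_nonneg (aL - aR), mul_pos hεpos h1]
    · rintro ⟨hle, heq⟩ x₂ hx εL εR hεL hεR δ
      rw [heq]
      simp
      nlinarith
end
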